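/- Suppose all agents of the same type have the same endowment (μ^E(a) = μ^E(b) whenever a, b have the same type). Then the problem is rationalizable if and only if μ(a) = μ(b) for all same-type agents a, b; i.e., if and only if all agents of a type receive the same house type. -/

import Mathlib

/-- Arc of the allocation graph G^big: `(a,b)` is an arc iff `μ a = μE b`. -/
def arcBig {A H : Type*} (μE μ : A → H) (a b : A) : Prop := μ a = μE b

/-- Two agents lie in the same strongly connected component of G^big. -/
def sameSCC {A H : Type*} (μE μ : A → H) (a b : A) : Prop :=
  Relation.ReflTransGen (arcBig μE μ) a b ∧ Relation.ReflTransGen (arcBig μE μ) b a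

/-- For each house type, the number of agents allocated it equals the number endowed with it. -/
def BalancedAlloc {A H : Type*} (μE μ : A → H) : Prop :=
  ∀ h : H, Nat.card {a : A // μ a = h} = Nat.card {a : A // μE a = h}

/-- A directed cycle: a nonempty list of distinct vertices with consecutive arcs,
and an arc from the last vertex back to the first. A single vertex with a
self-loop is a cycle of length 1. -/
def IsCycle {V : Type*} (R : V → V → Prop) (l : List V) : Prop :=
  l ≠ [] ∧ l.Nodup ∧ l.Chain' R ∧ ∀ h : l ≠ [], R (l.getLast h) (l.head h)

/-- A blocking coalition: a nonempty coalition `C` and a reallocation `μ'` of its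
own endowments (as multisets) making every member weakly better off and at least
one member strictly better off, w.r.t. the strict type-preference profile `P`. -/
def Blocking {A H T : Type*} (tp : A → T) (μE μ : A → H)
    (P : T → LinearOrder H) : Prop :=
  ∃ (C : Finset A) (μ' : A → H),
    C.Nonempty ∧
    C.val.map μ' = C.val.map μE ∧
    (∀ a ∈ C, (P (tp a)).le (μ a) (μ' a)) ∧
    (∃ a ∈ C, (P (tp a)).lt (μ a) (μ' a))

/-- The allocation `μ` is rationalizable: some strict type-preference profile places
it in the strong core (no blocking coalition). -/
def Rationalizable {A H T : Type*} (tp : A → T) (μE μ : A → H) : Prop :=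
  ∃ P : T → LinearOrder H, ¬ Blocking tp μE μ P

open Classical in
/-- Balance gives a permutation matching allocations to endowments. -/
lemma stmt7_exists_perm {A H : Type*} [Fintype A] (μE μ : A → H)
    (hbal : BalancedAlloc μE μ) :
    ∃ π : Equiv.Perm A, ∀ x, μE (π x) = μ x := by
  have e : ∀ h : H, {a : A // μ a = h} ≃ {a : A // μE a = h} := fun h =>
    (Finite.card_eq.mp (hbal h)).some
  refine ⟨((Equiv.sigmaFiberEquiv μ).symm.trans (Equiv.sigmaCongrRight e)).trans
    (Equiv.sigmaFiberEquiv μE), fun x => ?_⟩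
  simp only [Equiv.trans_apply]
  have h1 : (Equiv.sigmaFiberEquiv μ).symm x = ⟨μ x, ⟨x, rfl⟩⟩ := rfl
  rw [h1]
  exact (e (μ x) ⟨x, rfl⟩).2

open Classical in
/-- Given the matching permutation and two distinct agents with the same endowment,
there is a "balanced" set of agents containing `b` but not `a`. -/
lemma stmt7_exists_O {A H : Type*} [Fintype A] (μE μ : A → H)
    (π : Equiv.Perm A) (hπ : ∀ x, μE (π x) = μ x)
    (a b : A) (hab : a ≠ b) (he : μE a = μE b) :
    ∃ O : Finset A, b ∈ O ∧ a ∉ O ∧ O.val.map μ = O.val.map μE := by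
  have hfin : ∃ j : ℕ, (π ^ (j+1)) b = a ∨ (π ^ (j+1)) b = b := by
    refine ⟨orderOf π - 1, Or.inr ?_⟩
    have h1 : 0 < orderOf π := orderOf_pos π
    rw [Nat.sub_add_cancel h1, pow_orderOf_eq_one]
    rfl
  set m := Nat.find hfin with hm
  set k := m + 1 with hk
  have hks : (π ^ k) b = a ∨ (π ^ k) b = b := Nat.find_spec hfin
  have hmin : ∀ j, 1 ≤ j → j < k → (π ^ j) b ≠ a ∧ (π ^ j) b ≠ b := by
    intro j h1 h2
    have := Nat.find_min hfin (m := j - 1) (by omega)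
    rw [Nat.sub_add_cancel h1] at this
    push_neg at this; exact this
  have hstep : ∀ x : ℕ, π ((π ^ x) b) = (π ^ (x+1)) b := by
    intro x; rw [pow_succ']; rfl
  set f : ℕ → A := fun j => (π ^ j) b with hf
  set l : List A := (List.range k).map f with hl
  have hinj : ∀ i j, i < k → j < k → f i = f j → i = j := by
    intro i j hi hj hij
    by_contra hne
    wlog hlt : i < j generalizing i j
    · exact this j i hj hi hij.symm (Ne.symm hne) (by omega)
    have : (π ^ (j - i)) b = b := by
      have h2 : (π ^ i) ((π ^ (j-i)) b) = (π ^ i) b := by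
        rw [← Equiv.Perm.mul_apply, ← pow_add, Nat.add_sub_cancel' (le_of_lt hlt)]
        exact hij.symm
      exact (π ^ i).injective h2
    exact (hmin (j - i) (by omega) (by omega)).2 this
  have hnodup : l.Nodup := by
    rw [hl, List.nodup_map_iff_inj_on List.nodup_range]
    intro i hi j hj
    simp only [List.mem_range] at hi hj
    exact fun h => hinj i j hi hj h
  refine ⟨⟨(l : Multiset A), by exact_mod_cast hnodup⟩, ?_, ?_, ?_⟩
  · show b ∈ (l : Multiset A)
    rw [Multiset.mem_coe, hl]
    exact List.mem_map.mpr ⟨0, List.mem_range.mpr (by omega), rfl⟩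
  · show a ∉ (l : Multiset A)
    rw [Multiset.mem_coe, hl]
    rintro hmem
    obtain ⟨j, hj, hja⟩ := List.mem_map.mp hmem
    rw [List.mem_range] at hj
    rcases Nat.eq_zero_or_pos j with h0 | h0
    · subst h0; exact hab hja.symm
    · exact (hmin j h0 hj).1 hja
  · show ((l : Multiset A)).map μ = ((l : Multiset A)).map μE
    have hgen : ∀ L : List A, L.map μ = (L.map π).map μE := by
      intro L
      rw [List.map_map]
      exact List.map_congr_left (fun x _ => (hπ x).symm)
    have key : List.Perm (l.map μ) (l.map μE) := by
      have h2 : l.map π = ((List.range m).map (fun j => (π ^ (j+1)) b)) ++ [(π ^ k) b] := by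
        rw [hl, List.map_map, hk, List.range_succ, List.map_append]
        congr 1
        · exact List.map_congr_left (fun x _ => hstep x)
        · simp only [List.map_cons, List.map_nil]
          congr 1
          exact hstep m
      have h3 : l = b :: ((List.range m).map (fun j => (π ^ (j+1)) b)) := by
        rw [hl, hk, List.range_succ_eq_map, List.map_cons, List.map_map]
        congr 1
      have h4 : μE ((π ^ k) b) = μE b := by
        rcases hks with h | h <;> rw [h]; exact he
      rw [hgen l, h2]
      rw [h3]
      simp only [List.map_append, List.map_cons, List.map_nil, h4]
      exact List.perm_append_singleton _ _
    rw [Multiset.map_coe, Multiset.map_coe]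
    exact Multiset.coe_eq_coe.mpr key

open Classical in
/-- From such a set, a blocking coalition for agent `a` envying `b`. -/
lemma stmt7_mk_blocking {A H T : Type*} [Fintype A] (tp : A → T) (μE μ : A → H)
    (P : T → LinearOrder H) (a b : A)
    (O : Finset A) (hbO : b ∈ O) (haO : a ∉ O)
    (hO : O.val.map μ = O.val.map μE)
    (he : μE a = μE b)
    (hlt : (P (tp a)).lt (μ a) (μ b)) :
    Blocking tp μE μ P := by
  set E := O.erase b with hE
  have haE : a ∉ E := fun h => haO (Finset.mem_of_mem_erase h)
  set μ' := Function.update μ a (μ b) with hμ'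
  have hupd : ∀ x ∈ E.val, μ' x = μ x := by
    intro x hx
    exact Function.update_of_ne (by rintro rfl; exact haE hx) _ _
  have h5 : μ' a = μ b := Function.update_self _ _ _
  refine ⟨insert a E, μ', ⟨a, Finset.mem_insert_self _ _⟩, ?_, ?_, ?_⟩
  · rw [Finset.insert_val_of_notMem haE, Multiset.map_cons, Multiset.map_cons,
      h5, he, Multiset.map_congr rfl hupd]
    have hOv : O.val = b ::ₘ E.val := by
      rw [hE, Finset.erase_val]
      exact (Multiset.cons_erase hbO).symm
    have h := hO
    rw [hOv, Multiset.map_cons, Multiset.map_cons] at h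
    exact h
  · intro x hx
    rcases Finset.mem_insert.mp hx with rfl | hx'
    · rw [h5]
      exact ((P (tp x)).lt_iff_le_not_ge _ _ |>.mp hlt).1
    · rw [hupd x hx']
      exact (P (tp x)).le_refl _
  · refine ⟨a, Finset.mem_insert_self _ _, ?_⟩
    rw [h5]
    exact hlt

open Classical in
/-- Sufficiency: type-homogeneous allocations are rationalizable. -/
lemma stmt7_rev {A H T : Type*} [Fintype A] [Fintype H] (tp : A → T) (μE μ : A → H)
    (hsame : ∀ a b : A, tp a = tp b → μ a = μ b) :
    ∃ P : T → LinearOrder H, ¬ Blocking tp μE μ P := by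
  set n := Fintype.card H with hn
  set emb : H → ℕ := fun h => ((Fintype.equivFin H) h : ℕ) with hemb
  have hembn : ∀ h, emb h < n := fun h => ((Fintype.equivFin H) h).isLt
  set F : T → H → ℕ := fun t h => if ∃ a, tp a = t ∧ μ a = h then n else emb h with hF
  have hFinj : ∀ t, Function.Injective (F t) := by
    intro t h h' hh
    simp only [hF] at hh
    by_cases c1 : ∃ a, tp a = t ∧ μ a = h <;> by_cases c2 : ∃ a, tp a = t ∧ μ a = h'
    · obtain ⟨x, hx1, hx2⟩ := c1
      obtain ⟨y, hy1, hy2⟩ := c2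
      rw [← hx2, ← hy2]
      exact hsame x y (hx1.trans hy1.symm)
    · rw [if_pos c1, if_neg c2] at hh
      exact absurd (hh ▸ hembn h') (lt_irrefl n)
    · rw [if_neg c1, if_pos c2] at hh
      exact absurd (hh.symm ▸ hembn h) (lt_irrefl n)
    · rw [if_neg c1, if_neg c2] at hh
      exact (Fintype.equivFin H).injective (Fin.val_injective hh)
  refine ⟨fun t => LinearOrder.lift' (F t) (hFinj t), ?_⟩
  rintro ⟨C, μ', hne, hmult, hle, x, hxC, hlt⟩
  have h1 : F (tp x) (μ x) = n := if_pos ⟨x, rfl, rfl⟩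
  have h2 : F (tp x) (μ' x) ≤ n := by
    by_cases c : ∃ a, tp a = tp x ∧ μ a = μ' x
    · rw [hF]; simp only [if_pos c]; exact le_refl n
    · rw [hF]; simp only [if_neg c]; exact le_of_lt (hembn _)
  have h3 : F (tp x) (μ x) < F (tp x) (μ' x) := hlt
  omega

/-- if all agents of the same type share the same endowment, then the
problem is rationalizable iff all same-type agents receive the same house type. -/
theorem stmt7 {A H T : Type*} [Fintype A] [Fintype H] (tp : A → T)
    (μE μ : A → H) (hbal : BalancedAlloc μE μ)
    (hend : ∀ a b : A, tp a = tp b → μE a = μE b) :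
    Rationalizable tp μE μ ↔ ∀ a b : A, tp a = tp b → μ a = μ b := by
  constructor
  · rintro ⟨P, hnb⟩ a b htp
    by_contra hne
    obtain ⟨π, hπ⟩ := stmt7_exists_perm μE μ hbal
    have hab : a ≠ b := fun h => hne (h ▸ rfl)
    letI := P (tp a)
    rcases Ne.lt_or_gt hne with h | h
    · -- μ a < μ b in P (tp a): a envies b
      obtain ⟨O, hbO, haO, hO⟩ := stmt7_exists_O μE μ π hπ a b hab (hend a b htp)
      exact hnb (stmt7_mk_blocking tp μE μ P a b O hbO haO hO (hend a b htp) h)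
    · -- μ b < μ a in P (tp a) = P (tp b): b envies a
      obtain ⟨O, haO', hbO', hO⟩ := stmt7_exists_O μE μ π hπ b a hab.symm (hend b a htp.symm)
      have h' : (P (tp b)).lt (μ b) (μ a) := by rw [← htp]; exact h
      exact hnb (stmt7_mk_blocking tp μE μ P b a O haO' hbO' hO (hend b a htp.symm) h')
  · exact fun hsame => stmt7_rev tp μE μ hsame
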